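/- arXiv:1007.1443 — 4 statements merged into one kernel-verified Lean document; each statement's English description precedes it below -/
import Mathlib

section
/- Suppose F, H, B : ℝ → Matrix (Fin 2) (Fin 2) ℝ are differentiable and satisfy for all t: F'(t) = 2H(t), H'(t) = 2λ(t)²·F(t) − 2H(t) − μ(t)·B(t), B'(t) = μ(t)·H(t) − 2B(t), with F(0) = M₂, H(0) = −M₃, B(0) = M₁. Then F(t)² = −I₂ for every t ∈ ℝ. -/
set_option maxHeartbeats 1000000

open Matrix

/-- `M₁ = !![1, 0; 0, -1]` -/
def M1 : Matrix (Fin 2) (Fin 2) ℝ := !![1, 0; 0, -1]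
/-- `M₂ = !![0, 1; -1, 0]` -/
def M2 : Matrix (Fin 2) (Fin 2) ℝ := !![0, 1; -1, 0]
/-- `M₃ = !![0, 1; 1, 0]` -/
def M3 : Matrix (Fin 2) (Fin 2) ℝ := !![0, 1; 1, 0]

/-- The function `λ(t) = e^(-2t)`. -/
noncomputable def lam (t : ℝ) : ℝ := Real.exp (-2 * t)

/-- Kronecker delta -/
def dl (i j : Fin 2) : ℝ := if i = j then 1 else 0

lemma lam_hasDerivAt (t : ℝ) : HasDerivAt (fun s => lam s ^ 2) (-4 * lam t ^ 2) t := by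
  have h1 : HasDerivAt (fun s : ℝ => -2 * s) (-2) t := by
    simpa using (hasDerivAt_id t).const_mul (-2 : ℝ)
  have h2 : HasDerivAt lam (Real.exp (-2 * t) * (-2)) t := h1.exp
  have h3 := h2.pow 2
  simp only [lam] at *
  exact h3.congr_deriv (by norm_num; ring)

lemma lam_pos (t : ℝ) : 0 < lam t := Real.exp_pos _


@[simp] lemma vec6_two {α : Type*} (a b c d e f : α) : ![a,b,c,d,e,f] 2 = c := rfl
@[simp] lemma vec6_three {α : Type*} (a b c d e f : α) : ![a,b,c,d,e,f] 3 = d := rfl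
@[simp] lemma vec6_four {α : Type*} (a b c d e f : α) : ![a,b,c,d,e,f] 4 = e := rfl
@[simp] lemma vec6_five {α : Type*} (a b c d e f : α) : ![a,b,c,d,e,f] 5 = f := rfl

@[simp] lemma vec6_mk0 {α : Type*} (a b c d e f : α) (h : 0 < 6) :
    ![a,b,c,d,e,f] ⟨0, h⟩ = a := rfl
@[simp] lemma vec6_mk1 {α : Type*} (a b c d e f : α) (h : 1 < 6) :
    ![a,b,c,d,e,f] ⟨1, h⟩ = b := rfl
@[simp] lemma vec6_mk2 {α : Type*} (a b c d e f : α) (h : 2 < 6) :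
    ![a,b,c,d,e,f] ⟨2, h⟩ = c := rfl
@[simp] lemma vec6_mk3 {α : Type*} (a b c d e f : α) (h : 3 < 6) :
    ![a,b,c,d,e,f] ⟨3, h⟩ = d := rfl
@[simp] lemma vec6_mk4 {α : Type*} (a b c d e f : α) (h : 4 < 6) :
    ![a,b,c,d,e,f] ⟨4, h⟩ = e := rfl
@[simp] lemma vec6_mk5 {α : Type*} (a b c d e f : α) (h : 5 < 6) :
    ![a,b,c,d,e,f] ⟨5, h⟩ = f := rfl

/-- vector of quadratic quantities -/
noncomputable def Yv (F H B : ℝ → Matrix (Fin 2) (Fin 2) ℝ) (t : ℝ) :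
    Fin 6 → Fin 2 → Fin 2 → ℝ :=
![fun i j => F t i 0 * F t 0 j + F t i 1 * F t 1 j + dl i j,
  fun i j => (F t i 0 * H t 0 j + F t i 1 * H t 1 j) + (H t i 0 * F t 0 j + H t i 1 * F t 1 j),
  fun i j => (F t i 0 * B t 0 j + F t i 1 * B t 1 j) + (B t i 0 * F t 0 j + B t i 1 * F t 1 j),
  fun i j => H t i 0 * H t 0 j + H t i 1 * H t 1 j - lam t ^ 2 * dl i j,
  fun i j => (H t i 0 * B t 0 j + H t i 1 * B t 1 j) + (B t i 0 * H t 0 j + B t i 1 * H t 1 j),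
  fun i j => B t i 0 * B t 0 j + B t i 1 * B t 1 j - lam t ^ 2 * dl i j]

/-- coefficient matrix -/
noncomputable def Am (μ : ℝ → ℝ) (t : ℝ) : Fin 6 → Fin 6 → ℝ :=
![![0, 2, 0, 0, 0, 0],
  ![4 * lam t ^ 2, -2, -(μ t), 4, 0, 0],
  ![0, μ t, -2, 0, 2, 0],
  ![0, 2 * lam t ^ 2, 0, -4, -(μ t), 0],
  ![0, 0, 2 * lam t ^ 2, 2 * μ t, -4, -(2 * μ t)],
  ![0, 0, 0, 0, μ t, -4]]

noncomputable def Dv (μ : ℝ → ℝ) (F H B : ℝ → Matrix (Fin 2) (Fin 2) ℝ) (t : ℝ) :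
    Fin 6 → Fin 2 → Fin 2 → ℝ :=
  fun k i j => ∑ m, Am μ t k m * Yv F H B t m i j

/-- Gronwall-type uniqueness -/
lemma gron {E : Type*} [NormedAddCommGroup E] [NormedSpace ℝ E]
    {y y' : ℝ → E} (hy : ∀ t, HasDerivAt y (y' t) t)
    {K : ℝ → ℝ} (hK : Continuous K)
    (hb : ∀ t, ‖y' t‖ ≤ K t * ‖y t‖) (h0 : y 0 = 0) : ∀ t, y t = 0 := by
  have key : ∀ (z z' : ℝ → E), (∀ t, HasDerivAt z (z' t) t) → ∀ (L : ℝ → ℝ), Continuous L →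
      (∀ t, ‖z' t‖ ≤ L t * ‖z t‖) → z 0 = 0 → ∀ t, 0 ≤ t → z t = 0 := by
    intro z z' hz L hL hbz hz0 t ht
    obtain ⟨C, hC⟩ := isCompact_Icc.exists_bound_of_continuousOn
      (s := Set.Icc (0:ℝ) t) hL.continuousOn
    have hnorm := norm_le_gronwallBound_of_norm_deriv_right_le
      (f := z) (f' := z') (δ := 0) (K := C) (ε := 0) (a := 0) (b := t)
      (fun s _ => (hz s).continuousAt.continuousWithinAt)
      (fun x _ => (hz x).hasDerivWithinAt)
      (by simp [hz0])
      (fun x hx => by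
        have h1 : L x ≤ C := le_trans (le_abs_self _) (hC x ⟨hx.1, hx.2.le⟩)
        calc ‖z' x‖ ≤ L x * ‖z x‖ := hbz x
          _ ≤ C * ‖z x‖ := mul_le_mul_of_nonneg_right h1 (norm_nonneg _)
          _ = C * ‖z x‖ + 0 := by ring)
    have := hnorm t ⟨ht, le_refl t⟩
    rw [gronwallBound_ε0_δ0] at this
    exact norm_le_zero_iff.mp this
  intro t
  rcases le_or_gt 0 t with ht | ht
  · exact key y y' hy K hK hb h0 t ht
  · have hz : ∀ s, HasDerivAt (fun u => y (-u)) ((-1 : ℝ) • y' (-s)) s := by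
      intro s
      exact HasDerivAt.scomp s (hy (-s)) (by simpa using (hasDerivAt_id s).const_mul (-1 : ℝ))
    have := key (fun u => y (-u)) (fun s => (-1 : ℝ) • y' (-s)) hz (fun s => K (-s))
      (hK.comp continuous_neg)
      (fun s => by simpa using hb (-s)) (by simpa using h0) (-t) (by linarith)
    simpa using this

lemma main_aux (μ : ℝ → ℝ) (hμ : Continuous μ) (F H B : ℝ → Matrix (Fin 2) (Fin 2) ℝ)
    (hF : ∀ t i j, HasDerivAt (fun s => F s i j) (2 * H t i j) t)
    (hH : ∀ t i j, HasDerivAt (fun s => H s i j)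
      (2 * lam t ^ 2 * F t i j - 2 * H t i j - μ t * B t i j) t)
    (hB : ∀ t i j, HasDerivAt (fun s => B s i j) (μ t * H t i j - 2 * B t i j) t)
    (hF0 : F 0 = M2) (hH0 : H 0 = -M3) (hB0 : B 0 = M1) :
    ∀ t i j, F t i 0 * F t 0 j + F t i 1 * F t 1 j + dl i j = 0 := by
  have hderiv : ∀ t, HasDerivAt (Yv F H B) (Dv μ F H B t) t := by
    intro t
    rw [hasDerivAt_pi]
    intro k
    rw [hasDerivAt_pi]
    intro i
    rw [hasDerivAt_pi]
    intro j
    fin_cases k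
    · have hd := (((hF t i 0).mul (hF t 0 j)).add ((hF t i 1).mul (hF t 1 j))).add_const (dl i j)
      refine hd.congr_deriv ?_
      simp only [Dv, Am, Yv, Fin.sum_univ_six, vec6_two, vec6_three, vec6_four, vec6_five,
        vec6_mk0, vec6_mk1, vec6_mk2, vec6_mk3, vec6_mk4, vec6_mk5,
        Matrix.cons_val_zero, Matrix.cons_val_one, Matrix.head_cons]
      ring
    · have hd := (((hF t i 0).mul (hH t 0 j)).add ((hF t i 1).mul (hH t 1 j))).add
        (((hH t i 0).mul (hF t 0 j)).add ((hH t i 1).mul (hF t 1 j)))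
      refine hd.congr_deriv ?_
      simp only [Dv, Am, Yv, Fin.sum_univ_six, vec6_two, vec6_three, vec6_four, vec6_five,
        vec6_mk0, vec6_mk1, vec6_mk2, vec6_mk3, vec6_mk4, vec6_mk5,
        Matrix.cons_val_zero, Matrix.cons_val_one, Matrix.head_cons]
      ring
    · have hd := (((hF t i 0).mul (hB t 0 j)).add ((hF t i 1).mul (hB t 1 j))).add
        (((hB t i 0).mul (hF t 0 j)).add ((hB t i 1).mul (hF t 1 j)))
      refine hd.congr_deriv ?_
      simp only [Dv, Am, Yv, Fin.sum_univ_six, vec6_two, vec6_three, vec6_four, vec6_five,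
        vec6_mk0, vec6_mk1, vec6_mk2, vec6_mk3, vec6_mk4, vec6_mk5,
        Matrix.cons_val_zero, Matrix.cons_val_one, Matrix.head_cons]
      ring
    · have hd := (((hH t i 0).mul (hH t 0 j)).add ((hH t i 1).mul (hH t 1 j))).sub
        ((lam_hasDerivAt t).mul_const (dl i j))
      refine hd.congr_deriv ?_
      simp only [Dv, Am, Yv, Fin.sum_univ_six, vec6_two, vec6_three, vec6_four, vec6_five,
        vec6_mk0, vec6_mk1, vec6_mk2, vec6_mk3, vec6_mk4, vec6_mk5,
        Matrix.cons_val_zero, Matrix.cons_val_one, Matrix.head_cons]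
      ring
    · have hd := (((hH t i 0).mul (hB t 0 j)).add ((hH t i 1).mul (hB t 1 j))).add
        (((hB t i 0).mul (hH t 0 j)).add ((hB t i 1).mul (hH t 1 j)))
      refine hd.congr_deriv ?_
      simp only [Dv, Am, Yv, Fin.sum_univ_six, vec6_two, vec6_three, vec6_four, vec6_five,
        vec6_mk0, vec6_mk1, vec6_mk2, vec6_mk3, vec6_mk4, vec6_mk5,
        Matrix.cons_val_zero, Matrix.cons_val_one, Matrix.head_cons]
      ring
    · have hd := (((hB t i 0).mul (hB t 0 j)).add ((hB t i 1).mul (hB t 1 j))).sub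
        ((lam_hasDerivAt t).mul_const (dl i j))
      refine hd.congr_deriv ?_
      simp only [Dv, Am, Yv, Fin.sum_univ_six, vec6_two, vec6_three, vec6_four, vec6_five,
        vec6_mk0, vec6_mk1, vec6_mk2, vec6_mk3, vec6_mk4, vec6_mk5,
        Matrix.cons_val_zero, Matrix.cons_val_one, Matrix.head_cons]
      ring
  have h0 : Yv F H B 0 = 0 := by
    have e : lam 0 = 1 := by simp [lam]
    funext k i j
    fin_cases k <;>
      simp only [Yv, hF0, hH0, hB0, e, Pi.zero_apply, one_pow,
        vec6_mk0, vec6_mk1, vec6_mk2, vec6_mk3, vec6_mk4, vec6_mk5,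
        Matrix.neg_apply, M1, M2, M3] <;>
      fin_cases i <;> fin_cases j <;>
      norm_num [dl]
  have hbound : ∀ t, ‖Dv μ F H B t‖ ≤ (4 * lam t ^ 2 + 4 * |μ t| + 8) * ‖Yv F H B t‖ := by
    intro t
    have hKnn : (0:ℝ) ≤ 4 * lam t ^ 2 + 4 * |μ t| + 8 := by positivity
    have hrhsnn : (0:ℝ) ≤ (4 * lam t ^ 2 + 4 * |μ t| + 8) * ‖Yv F H B t‖ :=
      mul_nonneg hKnn (norm_nonneg _)
    rw [pi_norm_le_iff_of_nonneg hrhsnn]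
    intro k
    rw [pi_norm_le_iff_of_nonneg hrhsnn]
    intro i
    rw [pi_norm_le_iff_of_nonneg hrhsnn]
    intro j
    have habs : ∀ m, |Yv F H B t m i j| ≤ ‖Yv F H B t‖ := by
      intro m
      calc |Yv F H B t m i j| = ‖Yv F H B t m i j‖ := rfl
        _ ≤ ‖Yv F H B t m i‖ := norm_le_pi_norm (Yv F H B t m i) j
        _ ≤ ‖Yv F H B t m‖ := norm_le_pi_norm (Yv F H B t m) i
        _ ≤ ‖Yv F H B t‖ := norm_le_pi_norm (Yv F H B t) m
    have hsum : ∀ k : Fin 6, ∑ m, |Am μ t k m| ≤ 4 * lam t ^ 2 + 4 * |μ t| + 8 := by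
      intro k
      have hl2 : (0:ℝ) ≤ lam t ^ 2 := sq_nonneg _
      have hm : (0:ℝ) ≤ |μ t| := abs_nonneg _
      fin_cases k
      all_goals
        simp only [Am, vec6_mk0, vec6_mk1, vec6_mk2, vec6_mk3, vec6_mk4, vec6_mk5]
      all_goals rw [Fin.sum_univ_six]
      all_goals
        simp only [Matrix.cons_val_zero, Matrix.cons_val_one, Matrix.head_cons,
          vec6_two, vec6_three, vec6_four, vec6_five]
      all_goals try simp [abs_mul, abs_of_nonneg hl2]
      all_goals nlinarith
    calc ‖Dv μ F H B t k i j‖ = |∑ m, Am μ t k m * Yv F H B t m i j| := rfl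
      _ ≤ ∑ m, |Am μ t k m * Yv F H B t m i j| := Finset.abs_sum_le_sum_abs _ _
      _ = ∑ m, |Am μ t k m| * |Yv F H B t m i j| := by simp [abs_mul]
      _ ≤ ∑ m, |Am μ t k m| * ‖Yv F H B t‖ := by
          apply Finset.sum_le_sum
          intro m _
          exact mul_le_mul_of_nonneg_left (habs m) (abs_nonneg _)
      _ = (∑ m, |Am μ t k m|) * ‖Yv F H B t‖ := by rw [Finset.sum_mul]
      _ ≤ (4 * lam t ^ 2 + 4 * |μ t| + 8) * ‖Yv F H B t‖ :=
          mul_le_mul_of_nonneg_right (hsum k) (norm_nonneg _)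
  have hKcont : Continuous (fun t => 4 * lam t ^ 2 + 4 * |μ t| + 8) := by
    have : Continuous lam := Real.continuous_exp.comp (continuous_const.mul continuous_id)
    fun_prop
  have hzero := gron hderiv hKcont hbound h0
  intro t i j
  have := congrFun (congrFun (congrFun (hzero t) 0) i) j
  simpa [Yv] using this

theorem stmt_1 (μ : ℝ → ℝ) (hμ : Continuous μ)
    (F H B : ℝ → Matrix (Fin 2) (Fin 2) ℝ)
    (hF : ∀ t i j, HasDerivAt (fun s => F s i j) (((2 : ℝ) • H t) i j) t)
    (hH : ∀ t i j, HasDerivAt (fun s => H s i j)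
      (((2 * (lam t) ^ 2) • F t - (2 : ℝ) • H t - μ t • B t) i j) t)
    (hB : ∀ t i j, HasDerivAt (fun s => B s i j)
      ((μ t • H t - (2 : ℝ) • B t) i j) t)
    (hF0 : F 0 = M2) (hH0 : H 0 = -M3) (hB0 : B 0 = M1) :
    ∀ t : ℝ, F t * F t = -(1 : Matrix (Fin 2) (Fin 2) ℝ) := by
  have hF' : ∀ t i j, HasDerivAt (fun s => F s i j) (2 * H t i j) t := by
    intro t i j
    simpa [Matrix.smul_apply, smul_eq_mul] using hF t i j
  have hH' : ∀ t i j, HasDerivAt (fun s => H s i j)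
      (2 * lam t ^ 2 * F t i j - 2 * H t i j - μ t * B t i j) t := by
    intro t i j
    simpa [Matrix.sub_apply, Matrix.smul_apply, smul_eq_mul] using hH t i j
  have hB' : ∀ t i j, HasDerivAt (fun s => B s i j) (μ t * H t i j - 2 * B t i j) t := by
    intro t i j
    simpa [Matrix.sub_apply, Matrix.smul_apply, smul_eq_mul] using hB t i j
  have key := main_aux μ hμ F H B hF' hH' hB' hF0 hH0 hB0
  intro t
  ext i j
  have := key t i j
  fin_cases i <;> fin_cases j <;>
    simp [Matrix.mul_apply, Fin.sum_univ_two, dl] at this ⊢ <;> linarith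
end

section
/- Suppose F, H, B : ℝ → Matrix (Fin 2) (Fin 2) ℝ are differentiable and satisfy for all t: F'(t) = 2H(t), H'(t) = 2λ(t)²·F(t) − 2H(t) − μ(t)·B(t), B'(t) = μ(t)·H(t) − 2B(t), with F(0) = M₂, H(0) = −M₃, B(0) = M₁. Then H(t)² = e^(−4t)·I₂ and B(t)² = e^(−4t)·I₂ for every t ∈ ℝ. -/
open Matrix

noncomputable def ee (t : ℝ) : ℝ := Real.exp (-4 * t)

lemma ee_pos (t : ℝ) : 0 < ee t := Real.exp_pos _

lemma lam_sq (t : ℝ) : lam t ^ 2 = ee t := by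
  rw [lam, ee, sq, ← Real.exp_add]; ring_nf

lemma hasDerivAt_ee (t : ℝ) : HasDerivAt ee (-4 * ee t) t := by
  have h : HasDerivAt (fun s : ℝ => -4 * s) (-4) t := by
    simpa using (hasDerivAt_id t).const_mul (-4)
  unfold ee
  simpa [mul_comm] using h.exp

lemma continuous_ee : Continuous ee := by
  unfold ee
  exact Real.continuous_exp.comp (continuous_const.mul continuous_id)

/-- If `u` solves a linear-type ODE bound and vanishes at 0, it vanishes for `t ≥ 0`. -/
lemma zero_of_gronwall {E : Type*} [NormedAddCommGroup E] [NormedSpace ℝ E]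
    {u ud : ℝ → E} {k : ℝ → ℝ} (hk : Continuous k)
    (hud : ∀ t, HasDerivAt u (ud t) t)
    (hb : ∀ t, ‖ud t‖ ≤ k t * ‖u t‖) (h0 : u 0 = 0) :
    ∀ t ≥ (0:ℝ), u t = 0 := by
  intro t ht
  obtain ⟨C, hC⟩ := (isCompact_Icc (a := (0:ℝ)) (b := t)).exists_bound_of_continuousOn
    hk.continuousOn
  have key := norm_le_gronwallBound_of_norm_deriv_right_le
    (f := u) (f' := ud) (δ := 0) (K := C) (ε := 0) (a := 0) (b := t)
    (fun s _ => ((hud s).continuousAt).continuousWithinAt)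
    (fun s _ => (hud s).hasDerivWithinAt)
    (by simp [h0])
    (fun s hs => by
      have h1 : k s ≤ C := (le_abs_self _).trans (by
        simpa [Real.norm_eq_abs] using hC s ⟨hs.1, hs.2.le⟩)
      have h2 := hb s
      have h3 : k s * ‖u s‖ ≤ C * ‖u s‖ :=
        mul_le_mul_of_nonneg_right h1 (norm_nonneg _)
      linarith)
  have := key t ⟨ht, le_refl t⟩
  rw [gronwallBound_ε0_δ0] at this
  exact norm_le_zero_iff.mp this

lemma zero_all {E : Type*} [NormedAddCommGroup E] [NormedSpace ℝ E]
    {u ud : ℝ → E} {k : ℝ → ℝ} (hk : Continuous k)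
    (hud : ∀ t, HasDerivAt u (ud t) t)
    (hb : ∀ t, ‖ud t‖ ≤ k t * ‖u t‖) (h0 : u 0 = 0) :
    ∀ t, u t = 0 := by
  intro t
  rcases le_or_gt 0 t with ht | ht
  · exact zero_of_gronwall hk hud hb h0 t ht
  · have hneg : ∀ s ≥ (0:ℝ), u (-s) = 0 := by
      apply zero_of_gronwall (u := fun s => u (-s)) (ud := fun s => (-1 : ℝ) • ud (-s))
        (k := fun s => k (-s)) (hk.comp continuous_neg)
      · intro s
        exact (hud (-s)).scomp s (hasDerivAt_neg s)
      · intro s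
        simpa [norm_smul] using hb (-s)
      · simpa using h0
    have := hneg (-t) (by linarith)
    simpa using this

section Aux

variable (μ : ℝ → ℝ) (F H B : ℝ → Matrix (Fin 2) (Fin 2) ℝ)

/-- The vector of deviations of the nine scalar invariants. -/
noncomputable def Vv (t : ℝ) : Fin 9 → ℝ :=
  ![F t 0 0 + F t 1 1,
    H t 0 0 + H t 1 1,
    B t 0 0 + B t 1 1,
    F t 0 0 * F t 0 0 + F t 0 1 * F t 1 0 + F t 1 0 * F t 0 1 + F t 1 1 * F t 1 1 + 2,
    F t 0 0 * H t 0 0 + F t 0 1 * H t 1 0 + F t 1 0 * H t 0 1 + F t 1 1 * H t 1 1,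
    F t 0 0 * B t 0 0 + F t 0 1 * B t 1 0 + F t 1 0 * B t 0 1 + F t 1 1 * B t 1 1,
    H t 0 0 * H t 0 0 + H t 0 1 * H t 1 0 + H t 1 0 * H t 0 1 + H t 1 1 * H t 1 1 - 2 * ee t,
    H t 0 0 * B t 0 0 + H t 0 1 * B t 1 0 + H t 1 0 * B t 0 1 + H t 1 1 * B t 1 1,
    B t 0 0 * B t 0 0 + B t 0 1 * B t 1 0 + B t 1 0 * B t 0 1 + B t 1 1 * B t 1 1 - 2 * ee t]

/-- The derivative of `Vv`, expressed as a linear combination of components of `Vv`. -/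
noncomputable def Vd (t : ℝ) : Fin 9 → ℝ :=
  ![2 * Vv F H B t 1,
    2 * ee t * Vv F H B t 0 - 2 * Vv F H B t 1 - μ t * Vv F H B t 2,
    μ t * Vv F H B t 1 - 2 * Vv F H B t 2,
    4 * Vv F H B t 4,
    2 * Vv F H B t 6 + 2 * ee t * Vv F H B t 3 - 2 * Vv F H B t 4 - μ t * Vv F H B t 5,
    2 * Vv F H B t 7 + μ t * Vv F H B t 4 - 2 * Vv F H B t 5,
    4 * ee t * Vv F H B t 4 - 4 * Vv F H B t 6 - 2 * μ t * Vv F H B t 7,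
    2 * ee t * Vv F H B t 5 + μ t * (Vv F H B t 6 - Vv F H B t 8) - 4 * Vv F H B t 7,
    2 * μ t * Vv F H B t 7 - 4 * Vv F H B t 8]

lemma hasDerivAt_Vv
    (hF : ∀ t i j, HasDerivAt (fun s => F s i j) (((2 : ℝ) • H t) i j) t)
    (hH : ∀ t i j, HasDerivAt (fun s => H s i j)
      (((2 * (lam t) ^ 2) • F t - (2 : ℝ) • H t - μ t • B t) i j) t)
    (hB : ∀ t i j, HasDerivAt (fun s => B s i j)
      ((μ t • H t - (2 : ℝ) • B t) i j) t)
    (t : ℝ) : HasDerivAt (fun s => Vv F H B s) (Vd μ F H B t) t := by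
  rw [hasDerivAt_pi]
  intro i
  fin_cases i
  · show HasDerivAt (fun s => F s 0 0 + F s 1 1)
      (2 * (H t 0 0 + H t 1 1)) t
    have h := (hF t 0 0).add (hF t 1 1)
    refine h.congr_deriv ?_
    simp only [Matrix.smul_apply, smul_eq_mul]
    ring
  · show HasDerivAt (fun s => H s 0 0 + H s 1 1)
      (2 * ee t * (F t 0 0 + F t 1 1) - 2 * (H t 0 0 + H t 1 1) - μ t * (B t 0 0 + B t 1 1)) t
    have h := (hH t 0 0).add (hH t 1 1)
    refine h.congr_deriv ?_
    simp only [Matrix.sub_apply, Matrix.smul_apply, smul_eq_mul, lam_sq]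
    ring
  · show HasDerivAt (fun s => B s 0 0 + B s 1 1)
      (μ t * (H t 0 0 + H t 1 1) - 2 * (B t 0 0 + B t 1 1)) t
    have h := (hB t 0 0).add (hB t 1 1)
    refine h.congr_deriv ?_
    simp only [Matrix.sub_apply, Matrix.smul_apply, smul_eq_mul]
    ring
  · show HasDerivAt (fun s => F s 0 0 * F s 0 0 + F s 0 1 * F s 1 0 + F s 1 0 * F s 0 1
        + F s 1 1 * F s 1 1 + 2)
      (4 * (F t 0 0 * H t 0 0 + F t 0 1 * H t 1 0 + F t 1 0 * H t 0 1 + F t 1 1 * H t 1 1)) t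
    have h := (((((hF t 0 0).mul (hF t 0 0)).add ((hF t 0 1).mul (hF t 1 0))).add
      ((hF t 1 0).mul (hF t 0 1))).add ((hF t 1 1).mul (hF t 1 1))).add_const 2
    refine h.congr_deriv ?_
    simp only [Matrix.smul_apply, smul_eq_mul]
    ring
  · show HasDerivAt (fun s => F s 0 0 * H s 0 0 + F s 0 1 * H s 1 0 + F s 1 0 * H s 0 1
        + F s 1 1 * H s 1 1)
      (2 * (H t 0 0 * H t 0 0 + H t 0 1 * H t 1 0 + H t 1 0 * H t 0 1 + H t 1 1 * H t 1 1
          - 2 * ee t)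
        + 2 * ee t * (F t 0 0 * F t 0 0 + F t 0 1 * F t 1 0 + F t 1 0 * F t 0 1
          + F t 1 1 * F t 1 1 + 2)
        - 2 * (F t 0 0 * H t 0 0 + F t 0 1 * H t 1 0 + F t 1 0 * H t 0 1 + F t 1 1 * H t 1 1)
        - μ t * (F t 0 0 * B t 0 0 + F t 0 1 * B t 1 0 + F t 1 0 * B t 0 1
          + F t 1 1 * B t 1 1)) t
    have h := ((((hF t 0 0).mul (hH t 0 0)).add ((hF t 0 1).mul (hH t 1 0))).add
      ((hF t 1 0).mul (hH t 0 1))).add ((hF t 1 1).mul (hH t 1 1))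
    refine h.congr_deriv ?_
    simp only [Matrix.sub_apply, Matrix.smul_apply, smul_eq_mul, lam_sq]
    ring
  · show HasDerivAt (fun s => F s 0 0 * B s 0 0 + F s 0 1 * B s 1 0 + F s 1 0 * B s 0 1
        + F s 1 1 * B s 1 1)
      (2 * (H t 0 0 * B t 0 0 + H t 0 1 * B t 1 0 + H t 1 0 * B t 0 1 + H t 1 1 * B t 1 1)
        + μ t * (F t 0 0 * H t 0 0 + F t 0 1 * H t 1 0 + F t 1 0 * H t 0 1 + F t 1 1 * H t 1 1)
        - 2 * (F t 0 0 * B t 0 0 + F t 0 1 * B t 1 0 + F t 1 0 * B t 0 1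
          + F t 1 1 * B t 1 1)) t
    have h := ((((hF t 0 0).mul (hB t 0 0)).add ((hF t 0 1).mul (hB t 1 0))).add
      ((hF t 1 0).mul (hB t 0 1))).add ((hF t 1 1).mul (hB t 1 1))
    refine h.congr_deriv ?_
    simp only [Matrix.sub_apply, Matrix.smul_apply, smul_eq_mul]
    ring
  · show HasDerivAt (fun s => H s 0 0 * H s 0 0 + H s 0 1 * H s 1 0 + H s 1 0 * H s 0 1
        + H s 1 1 * H s 1 1 - 2 * ee s)
      (4 * ee t * (F t 0 0 * H t 0 0 + F t 0 1 * H t 1 0 + F t 1 0 * H t 0 1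
          + F t 1 1 * H t 1 1)
        - 4 * (H t 0 0 * H t 0 0 + H t 0 1 * H t 1 0 + H t 1 0 * H t 0 1 + H t 1 1 * H t 1 1
          - 2 * ee t)
        - 2 * μ t * (H t 0 0 * B t 0 0 + H t 0 1 * B t 1 0 + H t 1 0 * B t 0 1
          + H t 1 1 * B t 1 1)) t
    have h := (((((hH t 0 0).mul (hH t 0 0)).add ((hH t 0 1).mul (hH t 1 0))).add
      ((hH t 1 0).mul (hH t 0 1))).add ((hH t 1 1).mul (hH t 1 1))).sub
      ((hasDerivAt_ee t).const_mul 2)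
    refine h.congr_deriv ?_
    simp only [Matrix.sub_apply, Matrix.smul_apply, smul_eq_mul, lam_sq]
    ring
  · show HasDerivAt (fun s => H s 0 0 * B s 0 0 + H s 0 1 * B s 1 0 + H s 1 0 * B s 0 1
        + H s 1 1 * B s 1 1)
      (2 * ee t * (F t 0 0 * B t 0 0 + F t 0 1 * B t 1 0 + F t 1 0 * B t 0 1
          + F t 1 1 * B t 1 1)
        + μ t * ((H t 0 0 * H t 0 0 + H t 0 1 * H t 1 0 + H t 1 0 * H t 0 1
            + H t 1 1 * H t 1 1 - 2 * ee t)
          - (B t 0 0 * B t 0 0 + B t 0 1 * B t 1 0 + B t 1 0 * B t 0 1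
            + B t 1 1 * B t 1 1 - 2 * ee t))
        - 4 * (H t 0 0 * B t 0 0 + H t 0 1 * B t 1 0 + H t 1 0 * B t 0 1
          + H t 1 1 * B t 1 1)) t
    have h := ((((hH t 0 0).mul (hB t 0 0)).add ((hH t 0 1).mul (hB t 1 0))).add
      ((hH t 1 0).mul (hB t 0 1))).add ((hH t 1 1).mul (hB t 1 1))
    refine h.congr_deriv ?_
    simp only [Matrix.sub_apply, Matrix.smul_apply, smul_eq_mul, lam_sq]
    ring
  · show HasDerivAt (fun s => B s 0 0 * B s 0 0 + B s 0 1 * B s 1 0 + B s 1 0 * B s 0 1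
        + B s 1 1 * B s 1 1 - 2 * ee s)
      (2 * μ t * (H t 0 0 * B t 0 0 + H t 0 1 * B t 1 0 + H t 1 0 * B t 0 1
          + H t 1 1 * B t 1 1)
        - 4 * (B t 0 0 * B t 0 0 + B t 0 1 * B t 1 0 + B t 1 0 * B t 0 1 + B t 1 1 * B t 1 1
          - 2 * ee t)) t
    have h := (((((hB t 0 0).mul (hB t 0 0)).add ((hB t 0 1).mul (hB t 1 0))).add
      ((hB t 1 0).mul (hB t 0 1))).add ((hB t 1 1).mul (hB t 1 1))).sub
      ((hasDerivAt_ee t).const_mul 2)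
    refine h.congr_deriv ?_
    simp only [Matrix.sub_apply, Matrix.smul_apply, smul_eq_mul]
    ring

lemma norm_Vd_le (t : ℝ) :
    ‖Vd μ F H B t‖ ≤ (4 + 4 * ee t + 2 * |μ t|) * ‖Vv F H B t‖ := by
  have hm0 : (0:ℝ) ≤ ‖Vv F H B t‖ := norm_nonneg _
  have hμ0 : (0:ℝ) ≤ |μ t| := abs_nonneg _
  have he0 : (0:ℝ) ≤ ee t := (ee_pos t).le
  have h1 : ∀ j : Fin 9, -‖Vv F H B t‖ ≤ Vv F H B t j ∧ Vv F H B t j ≤ ‖Vv F H B t‖ := by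
    intro j
    have := norm_le_pi_norm (Vv F H B t) j
    rw [Real.norm_eq_abs] at this
    exact abs_le.mp this
  have h2 : ∀ j : Fin 9, -(|μ t| * ‖Vv F H B t‖) ≤ μ t * Vv F H B t j ∧
      μ t * Vv F H B t j ≤ |μ t| * ‖Vv F H B t‖ := by
    intro j
    refine abs_le.mp ?_
    rw [abs_mul]
    exact mul_le_mul_of_nonneg_left (abs_le.mpr (h1 j)) hμ0
  have h3 : ∀ j : Fin 9, -(ee t * ‖Vv F H B t‖) ≤ ee t * Vv F H B t j ∧
      ee t * Vv F H B t j ≤ ee t * ‖Vv F H B t‖ := by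
    intro j
    refine abs_le.mp ?_
    rw [abs_mul, abs_of_nonneg he0]
    exact mul_le_mul_of_nonneg_left (abs_le.mpr (h1 j)) he0
  have hem : 0 ≤ ee t * ‖Vv F H B t‖ := mul_nonneg he0 hm0
  have hmm : 0 ≤ |μ t| * ‖Vv F H B t‖ := mul_nonneg hμ0 hm0
  rw [pi_norm_le_iff_of_nonneg (by positivity)]
  intro i
  rw [Real.norm_eq_abs]
  fin_cases i
  · show |2 * Vv F H B t 1| ≤ _
    rw [abs_le]
    constructor <;> linarith [(h1 1).1, (h1 1).2]
  · show |2 * ee t * Vv F H B t 0 - 2 * Vv F H B t 1 - μ t * Vv F H B t 2| ≤ _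
    rw [abs_le]
    constructor <;> linarith [(h3 0).1, (h3 0).2, (h1 1).1, (h1 1).2, (h2 2).1, (h2 2).2]
  · show |μ t * Vv F H B t 1 - 2 * Vv F H B t 2| ≤ _
    rw [abs_le]
    constructor <;> linarith [(h2 1).1, (h2 1).2, (h1 2).1, (h1 2).2]
  · show |4 * Vv F H B t 4| ≤ _
    rw [abs_le]
    constructor <;> linarith [(h1 4).1, (h1 4).2]
  · show |2 * Vv F H B t 6 + 2 * ee t * Vv F H B t 3 - 2 * Vv F H B t 4 - μ t * Vv F H B t 5| ≤ _
    rw [abs_le]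
    constructor <;> linarith [(h1 6).1, (h1 6).2, (h3 3).1, (h3 3).2, (h1 4).1, (h1 4).2,
      (h2 5).1, (h2 5).2]
  · show |2 * Vv F H B t 7 + μ t * Vv F H B t 4 - 2 * Vv F H B t 5| ≤ _
    rw [abs_le]
    constructor <;> linarith [(h1 7).1, (h1 7).2, (h2 4).1, (h2 4).2, (h1 5).1, (h1 5).2]
  · show |4 * ee t * Vv F H B t 4 - 4 * Vv F H B t 6 - 2 * μ t * Vv F H B t 7| ≤ _
    rw [abs_le]
    constructor <;> linarith [(h3 4).1, (h3 4).2, (h1 6).1, (h1 6).2, (h2 7).1, (h2 7).2]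
  · show |2 * ee t * Vv F H B t 5 + μ t * (Vv F H B t 6 - Vv F H B t 8) - 4 * Vv F H B t 7| ≤ _
    rw [abs_le]
    constructor <;> linarith [(h3 5).1, (h3 5).2, (h2 6).1, (h2 6).2, (h2 8).1, (h2 8).2,
      (h1 7).1, (h1 7).2]
  · show |2 * μ t * Vv F H B t 7 - 4 * Vv F H B t 8| ≤ _
    rw [abs_le]
    constructor <;> linarith [(h2 7).1, (h2 7).2, (h1 8).1, (h1 8).2]

end Aux

theorem stmt_2 (μ : ℝ → ℝ) (hμ : Continuous μ)
    (F H B : ℝ → Matrix (Fin 2) (Fin 2) ℝ)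
    (hF : ∀ t i j, HasDerivAt (fun s => F s i j) (((2 : ℝ) • H t) i j) t)
    (hH : ∀ t i j, HasDerivAt (fun s => H s i j)
      (((2 * (lam t) ^ 2) • F t - (2 : ℝ) • H t - μ t • B t) i j) t)
    (hB : ∀ t i j, HasDerivAt (fun s => B s i j)
      ((μ t • H t - (2 : ℝ) • B t) i j) t)
    (hF0 : F 0 = M2) (hH0 : H 0 = -M3) (hB0 : B 0 = M1) :
    ∀ t : ℝ, H t * H t = Real.exp (-4 * t) • (1 : Matrix (Fin 2) (Fin 2) ℝ) ∧
      B t * B t = Real.exp (-4 * t) • (1 : Matrix (Fin 2) (Fin 2) ℝ) := by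
  have hk : Continuous (fun t => 4 + 4 * ee t + 2 * |μ t|) :=
    (continuous_const.add (continuous_const.mul continuous_ee)).add
      (continuous_const.mul hμ.abs)
  have hee0 : ee 0 = 1 := by simp [ee]
  have h0 : Vv F H B 0 = 0 := by
    funext i
    fin_cases i
    · show F 0 0 0 + F 0 1 1 = (0:ℝ)
      rw [hF0]; norm_num [M2]
    · show H 0 0 0 + H 0 1 1 = (0:ℝ)
      rw [hH0]; norm_num [M3]
    · show B 0 0 0 + B 0 1 1 = (0:ℝ)
      rw [hB0]; norm_num [M1]
    · show F 0 0 0 * F 0 0 0 + F 0 0 1 * F 0 1 0 + F 0 1 0 * F 0 0 1 + F 0 1 1 * F 0 1 1 + 2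
        = (0:ℝ)
      rw [hF0]; norm_num [M2]
    · show F 0 0 0 * H 0 0 0 + F 0 0 1 * H 0 1 0 + F 0 1 0 * H 0 0 1 + F 0 1 1 * H 0 1 1 = (0:ℝ)
      rw [hF0, hH0]; norm_num [M2, M3]
    · show F 0 0 0 * B 0 0 0 + F 0 0 1 * B 0 1 0 + F 0 1 0 * B 0 0 1 + F 0 1 1 * B 0 1 1 = (0:ℝ)
      rw [hF0, hB0]; norm_num [M2, M1]
    · show H 0 0 0 * H 0 0 0 + H 0 0 1 * H 0 1 0 + H 0 1 0 * H 0 0 1 + H 0 1 1 * H 0 1 1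
        - 2 * ee 0 = (0:ℝ)
      rw [hH0, hee0]; norm_num [M3]
    · show H 0 0 0 * B 0 0 0 + H 0 0 1 * B 0 1 0 + H 0 1 0 * B 0 0 1 + H 0 1 1 * B 0 1 1 = (0:ℝ)
      rw [hH0, hB0]; norm_num [M3, M1]
    · show B 0 0 0 * B 0 0 0 + B 0 0 1 * B 0 1 0 + B 0 1 0 * B 0 0 1 + B 0 1 1 * B 0 1 1
        - 2 * ee 0 = (0:ℝ)
      rw [hB0, hee0]; norm_num [M1]
  have hVzero : ∀ s : ℝ, Vv F H B s = 0 :=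
    zero_all hk (hasDerivAt_Vv μ F H B hF hH hB) (norm_Vd_le μ F H B) h0
  intro t
  have E1 : H t 0 0 + H t 1 1 = 0 := congrFun (hVzero t) 1
  have E2 : B t 0 0 + B t 1 1 = 0 := congrFun (hVzero t) 2
  have E6 : H t 0 0 * H t 0 0 + H t 0 1 * H t 1 0 + H t 1 0 * H t 0 1 + H t 1 1 * H t 1 1
      - 2 * Real.exp (-4 * t) = 0 := congrFun (hVzero t) 6
  have E8 : B t 0 0 * B t 0 0 + B t 0 1 * B t 1 0 + B t 1 0 * B t 0 1 + B t 1 1 * B t 1 1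
      - 2 * Real.exp (-4 * t) = 0 := congrFun (hVzero t) 8
  rw [neg_mul] at E6 E8
  constructor
  · ext i j
    fin_cases i <;> fin_cases j <;>
      simp [Matrix.mul_apply, Fin.sum_univ_two, Matrix.smul_apply, Matrix.one_apply,
        smul_eq_mul]
    · linear_combination (1/2) * E6 + ((H t 0 0 - H t 1 1)/2) * E1
    · linear_combination (H t 0 1) * E1
    · linear_combination (H t 1 0) * E1
    · linear_combination (1/2) * E6 + ((H t 1 1 - H t 0 0)/2) * E1
  · ext i j
    fin_cases i <;> fin_cases j <;>
      simp [Matrix.mul_apply, Fin.sum_univ_two, Matrix.smul_apply, Matrix.one_apply,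
        smul_eq_mul]
    · linear_combination (1/2) * E8 + ((B t 0 0 - B t 1 1)/2) * E2
    · linear_combination (B t 0 1) * E2
    · linear_combination (B t 1 0) * E2
    · linear_combination (1/2) * E8 + ((B t 1 1 - B t 0 0)/2) * E2
end

section
/- Suppose F, H, B : ℝ → Matrix (Fin 2) (Fin 2) ℝ are differentiable and satisfy for all t: F'(t) = 2H(t), H'(t) = 2λ(t)²·F(t) − 2H(t) − μ(t)·B(t), B'(t) = μ(t)·H(t) − 2B(t), with F(0) = M₂, H(0) = −M₃, B(0) = M₁. Then for every t ∈ ℝ the anticommutation relations hold: H(t)F(t) = −F(t)H(t), B(t)F(t) = −F(t)B(t), and B(t)H(t) = −H(t)B(t). -/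
open Matrix

/-- The linear vector field governing the six anticommutator-type quantities. -/
def vf (c1 c2 : ℝ) (x : Fin 6 → Fin 2 → Fin 2 → ℝ) : Fin 6 → Fin 2 → Fin 2 → ℝ :=
  fun n i j =>
    match n with
    | ⟨0, _⟩ => 4 * c2 * x 3 i j + 4 * x 4 i j - 2 * x 0 i j - c1 * x 1 i j
    | ⟨1, _⟩ => c1 * x 0 i j - 2 * x 1 i j + 2 * x 2 i j
    | ⟨2, _⟩ => 2 * c2 * x 1 i j - 4 * x 2 i j + 2 * c1 * x 4 i j - 2 * c1 * x 5 i j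
    | ⟨3, _⟩ => 2 * x 0 i j
    | ⟨4, _⟩ => 2 * c2 * x 0 i j - 4 * x 4 i j - c1 * x 2 i j
    | ⟨5, _⟩ => c1 * x 2 i j - 4 * x 5 i j

/-- The six combined quantities: the three anticommutators and the three "squares". -/
noncomputable def Xf (F H B : ℝ → Matrix (Fin 2) (Fin 2) ℝ) (t : ℝ) :
    Fin 6 → Fin 2 → Fin 2 → ℝ :=
  fun n i j =>
    match n with
    | ⟨0, _⟩ => H t i 0 * F t 0 j + H t i 1 * F t 1 j + (F t i 0 * H t 0 j + F t i 1 * H t 1 j)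
    | ⟨1, _⟩ => B t i 0 * F t 0 j + B t i 1 * F t 1 j + (F t i 0 * B t 0 j + F t i 1 * B t 1 j)
    | ⟨2, _⟩ => B t i 0 * H t 0 j + B t i 1 * H t 1 j + (H t i 0 * B t 0 j + H t i 1 * B t 1 j)
    | ⟨3, _⟩ => F t i 0 * F t 0 j + F t i 1 * F t 1 j + (1 : Matrix (Fin 2) (Fin 2) ℝ) i j
    | ⟨4, _⟩ => H t i 0 * H t 0 j + H t i 1 * H t 1 j
        - Real.exp (-4 * t) * (1 : Matrix (Fin 2) (Fin 2) ℝ) i j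
    | ⟨5, _⟩ => B t i 0 * B t 0 j + B t i 1 * B t 1 j
        - Real.exp (-4 * t) * (1 : Matrix (Fin 2) (Fin 2) ℝ) i j

lemma vf_lip (C1 C2 : ℝ) (h1 : 0 ≤ C1) (h2 : 0 ≤ C2) (c1 c2 : ℝ)
    (hc1 : |c1| ≤ C1) (hc2 : |c2| ≤ C2) :
    LipschitzWith (Real.toNNReal (4 * C2 + 10 + 4 * C1)) (vf c1 c2) := by
  apply LipschitzWith.of_dist_le_mul
  intro x y
  rw [Real.coe_toNNReal _ (by positivity)]
  have hD : (0 : ℝ) ≤ dist x y := dist_nonneg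
  have hKD : (0 : ℝ) ≤ (4 * C2 + 10 + 4 * C1) * dist x y := by positivity
  rw [dist_pi_le_iff hKD]
  intro n
  rw [dist_pi_le_iff hKD]
  intro i
  rw [dist_pi_le_iff hKD]
  intro j
  have key : ∀ m : Fin 6, |x m i j - y m i j| ≤ dist x y := by
    intro m
    calc |x m i j - y m i j| = dist (x m i j) (y m i j) := (Real.dist_eq _ _).symm
      _ ≤ dist (x m i) (y m i) := dist_le_pi_dist _ _ j
      _ ≤ dist (x m) (y m) := dist_le_pi_dist _ _ i
      _ ≤ dist x y := dist_le_pi_dist x y m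
  have hmul : ∀ (c C : ℝ) (m : Fin 6), |c| ≤ C →
      |c * (x m i j - y m i j)| ≤ C * dist x y := by
    intro c C m hc
    rw [abs_mul]
    exact mul_le_mul hc (key m) (abs_nonneg _) ((abs_nonneg c).trans hc)
  have k0 := abs_le.mp (key 0)
  have k1 := abs_le.mp (key 1)
  have k2 := abs_le.mp (key 2)
  have k3 := abs_le.mp (key 3)
  have k4 := abs_le.mp (key 4)
  have k5 := abs_le.mp (key 5)
  have p10 := abs_le.mp (hmul c1 C1 0 hc1)
  have p11 := abs_le.mp (hmul c1 C1 1 hc1)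
  have p12 := abs_le.mp (hmul c1 C1 2 hc1)
  have p14 := abs_le.mp (hmul c1 C1 4 hc1)
  have p15 := abs_le.mp (hmul c1 C1 5 hc1)
  have p20 := abs_le.mp (hmul c2 C2 0 hc2)
  have p21 := abs_le.mp (hmul c2 C2 1 hc2)
  have p23 := abs_le.mp (hmul c2 C2 3 hc2)
  have hC1D : (0:ℝ) ≤ C1 * dist x y := by positivity
  have hC2D : (0:ℝ) ≤ C2 * dist x y := by positivity
  fin_cases n <;>
    · simp only [vf, Real.dist_eq]
      rw [abs_le]
      constructor <;>
        linarith [k0.1, k0.2, k1.1, k1.2, k2.1, k2.2, k3.1, k3.2, k4.1, k4.2, k5.1, k5.2,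
          p10.1, p10.2, p11.1, p11.2, p12.1, p12.2, p14.1, p14.2, p15.1, p15.2,
          p20.1, p20.2, p21.1, p21.2, p23.1, p23.2, hC1D, hC2D, hD]

theorem stmt_3 (μ : ℝ → ℝ) (hμ : Continuous μ)
    (F H B : ℝ → Matrix (Fin 2) (Fin 2) ℝ)
    (hF : ∀ t i j, HasDerivAt (fun s => F s i j) (((2 : ℝ) • H t) i j) t)
    (hH : ∀ t i j, HasDerivAt (fun s => H s i j)
      (((2 * (lam t) ^ 2) • F t - (2 : ℝ) • H t - μ t • B t) i j) t)
    (hB : ∀ t i j, HasDerivAt (fun s => B s i j)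
      ((μ t • H t - (2 : ℝ) • B t) i j) t)
    (hF0 : F 0 = M2) (hH0 : H 0 = -M3) (hB0 : B 0 = M1) :
    ∀ t : ℝ, H t * F t = -(F t * H t) ∧ B t * F t = -(F t * B t) ∧ B t * H t = -(H t * B t) := by
  have hF' : ∀ (t : ℝ) (i j : Fin 2), HasDerivAt (fun s => F s i j) (2 * H t i j) t := by
    intro t i j
    simpa [Matrix.smul_apply, smul_eq_mul] using hF t i j
  have hlam : ∀ t : ℝ, lam t ^ 2 = Real.exp (-4 * t) := by
    intro t
    rw [lam, sq, ← Real.exp_add]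
    ring_nf
  have hH' : ∀ (t : ℝ) (i j : Fin 2), HasDerivAt (fun s => H s i j)
      (2 * Real.exp (-4 * t) * F t i j - 2 * H t i j - μ t * B t i j) t := by
    intro t i j
    have h := hH t i j
    simp only [Matrix.sub_apply, Matrix.smul_apply, smul_eq_mul, hlam] at h
    exact h
  have hB' : ∀ (t : ℝ) (i j : Fin 2), HasDerivAt (fun s => B s i j)
      (μ t * H t i j - 2 * B t i j) t := by
    intro t i j
    simpa [Matrix.sub_apply, Matrix.smul_apply, smul_eq_mul] using hB t i j
  have hexp : ∀ t : ℝ, HasDerivAt (fun s : ℝ => Real.exp (-4 * s)) (-4 * Real.exp (-4 * t)) t := by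
    intro t
    have h1 : HasDerivAt (fun s : ℝ => -4 * s) (-4) t := by
      simpa using (hasDerivAt_id t).const_mul (-4 : ℝ)
    simpa [mul_comm] using h1.exp
  -- master derivative statement
  have hXd : ∀ t : ℝ, HasDerivAt (fun s => Xf F H B s)
      (vf (μ t) (Real.exp (-4 * t)) (Xf F H B t)) t := by
    intro t
    rw [hasDerivAt_pi]
    intro n
    rw [hasDerivAt_pi]
    intro i
    rw [hasDerivAt_pi]
    intro j
    fin_cases n
    · have d := (((hH' t i 0).mul (hF' t 0 j)).add ((hH' t i 1).mul (hF' t 1 j))).add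
        (((hF' t i 0).mul (hH' t 0 j)).add ((hF' t i 1).mul (hH' t 1 j)))
      simp only [Xf, vf]
      convert d using 1
      · funext x; simp only [Pi.add_apply, Pi.mul_apply]
      · ring
    · have d := (((hB' t i 0).mul (hF' t 0 j)).add ((hB' t i 1).mul (hF' t 1 j))).add
        (((hF' t i 0).mul (hB' t 0 j)).add ((hF' t i 1).mul (hB' t 1 j)))
      simp only [Xf, vf]
      convert d using 1
      · funext x; simp only [Pi.add_apply, Pi.mul_apply]
      · ring
    · have d := (((hB' t i 0).mul (hH' t 0 j)).add ((hB' t i 1).mul (hH' t 1 j))).add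
        (((hH' t i 0).mul (hB' t 0 j)).add ((hH' t i 1).mul (hB' t 1 j)))
      simp only [Xf, vf]
      convert d using 1
      · funext x; simp only [Pi.add_apply, Pi.mul_apply]
      · ring
    · have d := ((((hF' t i 0).mul (hF' t 0 j)).add ((hF' t i 1).mul (hF' t 1 j)))).add_const
        ((1 : Matrix (Fin 2) (Fin 2) ℝ) i j)
      simp only [Xf, vf]
      convert d using 1
      · funext x; simp only [Pi.add_apply, Pi.mul_apply]
      · ring
    · have d := ((((hH' t i 0).mul (hH' t 0 j)).add ((hH' t i 1).mul (hH' t 1 j)))).sub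
        ((hexp t).mul_const ((1 : Matrix (Fin 2) (Fin 2) ℝ) i j))
      simp only [Xf, vf]
      convert d using 1
      · funext x; simp only [Pi.add_apply, Pi.mul_apply, Pi.sub_apply]
      · ring
    · have d := ((((hB' t i 0).mul (hB' t 0 j)).add ((hB' t i 1).mul (hB' t 1 j)))).sub
        ((hexp t).mul_const ((1 : Matrix (Fin 2) (Fin 2) ℝ) i j))
      simp only [Xf, vf]
      convert d using 1
      · funext x; simp only [Pi.add_apply, Pi.mul_apply, Pi.sub_apply]
      · ring
  -- initial condition
  have hX0 : Xf F H B 0 = 0 := by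
    funext n i j
    fin_cases n <;> fin_cases i <;> fin_cases j <;>
      norm_num [Xf, hF0, hH0, hB0, M1, M2, M3, Matrix.one_apply, Matrix.neg_apply]
  -- vf kills zero
  have hvz : ∀ c1 c2 : ℝ, vf c1 c2 0 = 0 := by
    intro c1 c2
    funext n i j
    fin_cases n <;> simp [vf]
  intro τ
  set T : ℝ := |τ| + 1 with hTdef
  have hT0 : (0 : ℝ) < T := by positivity
  obtain ⟨Cb, hCb⟩ := (isCompact_Icc : IsCompact (Set.Icc (-T) T)).exists_bound_of_continuousOn
    hμ.continuousOn
  set C1 : ℝ := max Cb 0 with hC1def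
  set C2 : ℝ := Real.exp (4 * T) with hC2def
  set cl : ℝ → ℝ := fun t => max (-T) (min T t) with hcl
  have hclmem : ∀ t : ℝ, cl t ∈ Set.Icc (-T) T := by
    intro t
    refine ⟨le_max_left _ _, max_le (by linarith) (min_le_left _ _)⟩
  have hc1 : ∀ t : ℝ, |μ (cl t)| ≤ C1 := by
    intro t
    have := hCb (cl t) (hclmem t)
    rw [Real.norm_eq_abs] at this
    exact this.trans (le_max_left _ _)
  have hc2 : ∀ t : ℝ, |Real.exp (-4 * cl t)| ≤ C2 := by
    intro t
    rw [abs_of_pos (Real.exp_pos _), hC2def]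
    apply Real.exp_le_exp.mpr
    have := (hclmem t).1
    linarith
  set V : ℝ → (Fin 6 → Fin 2 → Fin 2 → ℝ) → (Fin 6 → Fin 2 → Fin 2 → ℝ) :=
    fun t x => vf (μ (cl t)) (Real.exp (-4 * cl t)) x with hV
  have hv : ∀ t : ℝ, LipschitzOnWith (Real.toNNReal (4 * C2 + 10 + 4 * C1)) (V t) Set.univ :=
    fun t => (vf_lip C1 C2 (le_max_right _ _) (Real.exp_pos _).le _ _
      (hc1 t) (hc2 t)).lipschitzOnWith
  have hcleq : ∀ t ∈ Set.Ioo (-T) T, cl t = t := by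
    intro t ht
    rw [hcl]
    simp only
    rw [min_eq_right ht.2.le, max_eq_right ht.1.le]
  have heqOn := ODE_solution_unique_of_mem_Icc (v := V) (s := fun _ => Set.univ) (fun t _ => hv t)
    (t₀ := 0) (a := -T) (b := T)
    (f := fun s => Xf F H B s) (g := fun _ => 0)
    (by constructor <;> linarith)
    (fun t _ => (hXd t).continuousAt.continuousWithinAt)
    (by
      intro t ht
      have := hXd t
      rw [hV]
      simp only
      rw [hcleq t ht]
      exact this)
    (fun t _ => Set.mem_univ _)
    continuousOn_const
    (by
      intro t ht
      have : V t 0 = 0 := hvz _ _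
      rw [this]
      exact hasDerivAt_const t 0)
    (fun t _ => Set.mem_univ _)
    hX0
  have hmem : τ ∈ Set.Icc (-T) T := by
    constructor
    · have := neg_abs_le τ
      linarith
    · have := le_abs_self τ
      linarith
  have hXτ : Xf F H B τ = 0 := heqOn hmem
  have hentry : ∀ (n : Fin 6) (i j : Fin 2), Xf F H B τ n i j = 0 := by
    intro n i j
    rw [hXτ]
    rfl
  refine ⟨?_, ?_, ?_⟩
  · ext i j
    have h0 := hentry 0 i j
    simp only [Xf] at h0
    simp only [Matrix.mul_apply, Matrix.neg_apply, Fin.sum_univ_two]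
    linarith
  · ext i j
    have h0 := hentry 1 i j
    simp only [Xf] at h0
    simp only [Matrix.mul_apply, Matrix.neg_apply, Fin.sum_univ_two]
    linarith
  · ext i j
    have h0 := hentry 2 i j
    simp only [Xf] at h0
    simp only [Matrix.mul_apply, Matrix.neg_apply, Fin.sum_univ_two]
    linarith
end

section
/- For i = 1, 2, 3 let fᵢ, hᵢ, bᵢ : ℝ → ℝ be differentiable functions satisfying fᵢ' = 2hᵢ, hᵢ' = 2λ²fᵢ − 2hᵢ − μ·bᵢ, bᵢ' = μ·hᵢ − 2bᵢ, with initial values f₁(0)=0, h₁(0)=0, b₁(0)=1; f₂(0)=1, h₂(0)=0, b₂(0)=0; f₃(0)=0, h₃(0)=−1, b₃(0)=0. Define G(t) = !![f₂(t) − f₃(t), f₁(t); f₁(t), f₂(t) + f₃(t)]. Then G(t) = −M₂·(f₁(t)M₁ + f₂(t)M₂ + f₃(t)M₃), G(t) is a symmetric positive definite matrix for every t ∈ ℝ, and G(0) = I₂. -/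
open Matrix

lemma key_const (μ fi fj hi hj bi bj : ℝ → ℝ)
    (hfi : ∀ t, HasDerivAt fi (2 * hi t) t)
    (hfj : ∀ t, HasDerivAt fj (2 * hj t) t)
    (hhi : ∀ t, HasDerivAt hi (2 * (lam t) ^ 2 * fi t - 2 * hi t - μ t * bi t) t)
    (hhj : ∀ t, HasDerivAt hj (2 * (lam t) ^ 2 * fj t - 2 * hj t - μ t * bj t) t)
    (hbi : ∀ t, HasDerivAt bi (μ t * hi t - 2 * bi t) t)
    (hbj : ∀ t, HasDerivAt bj (μ t * hj t - 2 * bj t) t) (t : ℝ) :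
    fi t * fj t - Real.exp (4*t) * (hi t * hj t + bi t * bj t)
      = fi 0 * fj 0 - (hi 0 * hj 0 + bi 0 * bj 0) := by
  set g : ℝ → ℝ := fun s => fi s * fj s - Real.exp (4*s) * (hi s * hj s + bi s * bj s) with hg
  have hder : ∀ s, HasDerivAt g 0 s := by
    intro s
    have hexp : HasDerivAt (fun s : ℝ => Real.exp (4*s)) (4 * Real.exp (4*s)) s := by
      simpa [mul_comm] using (HasDerivAt.exp ((hasDerivAt_id s).const_mul 4))
    have h1 := ((hfi s).mul (hfj s)).sub
      (hexp.mul (((hhi s).mul (hhj s)).add ((hbi s).mul (hbj s))))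
    refine h1.congr_deriv (Eq.symm ?_)
    simp only [Pi.add_apply, Pi.mul_apply]
    have hl : Real.exp (4*s) * (lam s)^2 = 1 := by
      have h4 : (4:ℝ)*s + (-2*s + -2*s) = 0 := by ring
      rw [lam, sq, ← Real.exp_add, ← Real.exp_add, h4, Real.exp_zero]
    linear_combination (2*(fi s * hj s + hi s * fj s))*hl
  have hgc : g t = g 0 := by
    apply is_const_of_deriv_eq_zero (fun s => (hder s).differentiableAt)
      (fun s => (hder s).deriv)
  simpa [hg] using hgc

lemma quad_alg (a1 a2 a3 p1 p2 p3 q1 q2 q3 : ℝ)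
    (e11 : a1*a1 - p1*p1 - q1*q1 = -1)
    (e22 : a2*a2 - p2*p2 - q2*q2 = 1)
    (e33 : a3*a3 - p3*p3 - q3*q3 = -1)
    (e12 : a1*a2 - p1*p2 - q1*q2 = 0)
    (e13 : a1*a3 - p1*p3 - q1*q3 = 0)
    (e23 : a2*a3 - p2*p3 - q2*q3 = 0) :
    a2^2 - a1^2 - a3^2 = 1 := by
  set W : Matrix (Fin 3) (Fin 3) ℝ := !![a1,a2,a3;p1,p2,p3;q1,q2,q3] with hWdef
  set J : Matrix (Fin 3) (Fin 3) ℝ := !![1,0,0;0,-1,0;0,0,-1] with hJdef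
  set C : Matrix (Fin 3) (Fin 3) ℝ := !![-1,0,0;0,1,0;0,0,-1] with hCdef
  have hJJ : J * J = 1 := by
    ext i j; fin_cases i <;> fin_cases j <;>
      simp [hJdef, Matrix.mul_apply, Fin.sum_univ_three, Matrix.transpose_apply, Matrix.vecHead, Matrix.vecTail, Matrix.cons_val_zero, Matrix.cons_val_one, Matrix.head_cons, Function.comp, Matrix.one_apply]
  have hCC : C * C = 1 := by
    ext i j; fin_cases i <;> fin_cases j <;>
      simp [hCdef, Matrix.mul_apply, Fin.sum_univ_three, Matrix.transpose_apply, Matrix.vecHead, Matrix.vecTail, Matrix.cons_val_zero, Matrix.cons_val_one, Matrix.head_cons, Function.comp, Matrix.one_apply]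
  have hW : Wᵀ * J * W = C := by
    ext i j
    fin_cases i <;> fin_cases j <;>
      simp [hWdef, hJdef, hCdef, Matrix.mul_apply, Fin.sum_univ_three, Matrix.transpose_apply, Matrix.vecHead, Matrix.vecTail, Matrix.cons_val_zero, Matrix.cons_val_one, Matrix.head_cons, Function.comp] <;>
      linarith
  have h1 : (C * Wᵀ * J) * W = 1 := by
    have : C * (Wᵀ * J * W) = 1 := by rw [hW, hCC]
    simpa [Matrix.mul_assoc] using this
  have h2 : W * (C * Wᵀ * J) = 1 := mul_eq_one_comm.mp h1
  have h3 : W * C * Wᵀ = J := by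
    have := congrArg (· * J) h2
    simpa [Matrix.mul_assoc, hJJ] using this
  have h4 := congrFun (congrFun h3 0) 0
  simp [hWdef, hJdef, hCdef, Matrix.mul_apply, Fin.sum_univ_three, Matrix.transpose_apply, Matrix.vecHead, Matrix.vecTail, Matrix.cons_val_zero, Matrix.cons_val_one, Matrix.head_cons, Function.comp] at h4
  nlinarith [h4]

theorem stmt_8 (μ : ℝ → ℝ) (hμ : Continuous μ)
    (f₁ f₂ f₃ h₁ h₂ h₃ b₁ b₂ b₃ : ℝ → ℝ)
    (hf₁ : ∀ t, HasDerivAt f₁ (2 * h₁ t) t)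
    (hf₂ : ∀ t, HasDerivAt f₂ (2 * h₂ t) t)
    (hf₃ : ∀ t, HasDerivAt f₃ (2 * h₃ t) t)
    (hh₁ : ∀ t, HasDerivAt h₁ (2 * (lam t) ^ 2 * f₁ t - 2 * h₁ t - μ t * b₁ t) t)
    (hh₂ : ∀ t, HasDerivAt h₂ (2 * (lam t) ^ 2 * f₂ t - 2 * h₂ t - μ t * b₂ t) t)
    (hh₃ : ∀ t, HasDerivAt h₃ (2 * (lam t) ^ 2 * f₃ t - 2 * h₃ t - μ t * b₃ t) t)
    (hb₁ : ∀ t, HasDerivAt b₁ (μ t * h₁ t - 2 * b₁ t) t)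
    (hb₂ : ∀ t, HasDerivAt b₂ (μ t * h₂ t - 2 * b₂ t) t)
    (hb₃ : ∀ t, HasDerivAt b₃ (μ t * h₃ t - 2 * b₃ t) t)
    (hf₁0 : f₁ 0 = 0) (hh₁0 : h₁ 0 = 0) (hb₁0 : b₁ 0 = 1)
    (hf₂0 : f₂ 0 = 1) (hh₂0 : h₂ 0 = 0) (hb₂0 : b₂ 0 = 0)
    (hf₃0 : f₃ 0 = 0) (hh₃0 : h₃ 0 = -1) (hb₃0 : b₃ 0 = 0) :
    (∀ t : ℝ, !![f₂ t - f₃ t, f₁ t; f₁ t, f₂ t + f₃ t]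
        = -(M2 * (f₁ t • M1 + f₂ t • M2 + f₃ t • M3))) ∧
    (∀ t : ℝ, (!![f₂ t - f₃ t, f₁ t; f₁ t, f₂ t + f₃ t] : Matrix (Fin 2) (Fin 2) ℝ).IsSymm) ∧
    (∀ t : ℝ, (!![f₂ t - f₃ t, f₁ t; f₁ t, f₂ t + f₃ t] : Matrix (Fin 2) (Fin 2) ℝ).PosDef) ∧
    !![f₂ 0 - f₃ 0, f₁ 0; f₁ 0, f₂ 0 + f₃ 0] = (1 : Matrix (Fin 2) (Fin 2) ℝ) := by
  have hE : ∀ t : ℝ, Real.exp (4*t) = Real.exp (2*t) * Real.exp (2*t) := by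
    intro t; rw [← Real.exp_add]; ring_nf
  -- the key invariant
  have hQ : ∀ t, f₂ t ^ 2 - f₁ t ^ 2 - f₃ t ^ 2 = 1 := by
    intro t
    have k11 := key_const μ f₁ f₁ h₁ h₁ b₁ b₁ hf₁ hf₁ hh₁ hh₁ hb₁ hb₁ t
    have k22 := key_const μ f₂ f₂ h₂ h₂ b₂ b₂ hf₂ hf₂ hh₂ hh₂ hb₂ hb₂ t
    have k33 := key_const μ f₃ f₃ h₃ h₃ b₃ b₃ hf₃ hf₃ hh₃ hh₃ hb₃ hb₃ t
    have k12 := key_const μ f₁ f₂ h₁ h₂ b₁ b₂ hf₁ hf₂ hh₁ hh₂ hb₁ hb₂ t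
    have k13 := key_const μ f₁ f₃ h₁ h₃ b₁ b₃ hf₁ hf₃ hh₁ hh₃ hb₁ hb₃ t
    have k23 := key_const μ f₂ f₃ h₂ h₃ b₂ b₃ hf₂ hf₃ hh₂ hh₃ hb₂ hb₃ t
    rw [hf₁0, hh₁0, hb₁0] at k11 k12 k13
    rw [hf₂0, hh₂0, hb₂0] at k22 k12 k23
    rw [hf₃0, hh₃0, hb₃0] at k33 k13 k23
    have hEt := hE t
    apply quad_alg (f₁ t) (f₂ t) (f₃ t)
      (Real.exp (2*t) * h₁ t) (Real.exp (2*t) * h₂ t) (Real.exp (2*t) * h₃ t)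
      (Real.exp (2*t) * b₁ t) (Real.exp (2*t) * b₂ t) (Real.exp (2*t) * b₃ t)
    · linear_combination k11 + (h₁ t * h₁ t + b₁ t * b₁ t) * hEt
    · linear_combination k22 + (h₂ t * h₂ t + b₂ t * b₂ t) * hEt
    · linear_combination k33 + (h₃ t * h₃ t + b₃ t * b₃ t) * hEt
    · linear_combination k12 + (h₁ t * h₂ t + b₁ t * b₂ t) * hEt
    · linear_combination k13 + (h₁ t * h₃ t + b₁ t * b₃ t) * hEt
    · linear_combination k23 + (h₂ t * h₃ t + b₂ t * b₃ t) * hEt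
  -- positivity of f₂
  have hcont : Continuous f₂ :=
    Differentiable.continuous (fun t => (hf₂ t).differentiableAt)
  have hf2pos : ∀ t, 0 < f₂ t := by
    intro t
    by_contra hle
    push_neg at hle
    have h01 : (0:ℝ) ∈ Set.uIcc (f₂ t) (f₂ 0) := by
      rw [hf₂0]; exact Set.mem_uIcc.mpr (Or.inl ⟨hle, zero_le_one⟩)
    obtain ⟨s, _, hs⟩ := intermediate_value_uIcc hcont.continuousOn h01
    have hq := hQ s
    rw [hs] at hq
    nlinarith [sq_nonneg (f₁ s), sq_nonneg (f₃ s)]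
  have hdet : ∀ t, (f₂ t - f₃ t) * (f₂ t + f₃ t) - f₁ t ^ 2 = 1 := by
    intro t; linear_combination hQ t
  have hfd : ∀ t, 0 < f₂ t - f₃ t := by
    intro t; nlinarith [hQ t, hf2pos t, sq_nonneg (f₁ t)]
  have hfs : ∀ t, 0 < f₂ t + f₃ t := by
    intro t; nlinarith [hQ t, hf2pos t, sq_nonneg (f₁ t)]
  refine ⟨?_, ?_, ?_, ?_⟩
  · intro t
    ext i j
    fin_cases i <;> fin_cases j <;>
      simp [M1, M2, M3, Matrix.mul_apply, Fin.sum_univ_two, Matrix.smul_apply,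
        Matrix.add_apply, Matrix.neg_apply] <;> ring
  · intro t
    unfold Matrix.IsSymm
    ext i j
    fin_cases i <;> fin_cases j <;> simp [Matrix.transpose_apply]
  · intro t
    refine Matrix.PosDef.of_dotProduct_mulVec_pos ?_ ?_
    · ext i j
      fin_cases i <;> fin_cases j <;> simp [Matrix.conjTranspose_apply]
    · intro x hx
      have hx' : x 0 ≠ 0 ∨ x 1 ≠ 0 := by
        by_contra hc
        push_neg at hc
        exact hx (funext fun i => by fin_cases i <;> simp [hc.1, hc.2])
      simp [dotProduct, Matrix.mulVec, Fin.sum_univ_two]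
      rcases hx' with h0 | h0
      · nlinarith [hdet t, hfd t, hfs t, sq_nonneg ((f₂ t + f₃ t) * x 1 + f₁ t * x 0),
          mul_self_pos.mpr h0]
      · nlinarith [hdet t, hfd t, hfs t, sq_nonneg ((f₂ t - f₃ t) * x 0 + f₁ t * x 1),
          mul_self_pos.mpr h0]
  · ext i j
    fin_cases i <;> fin_cases j <;>
      simp [hf₁0, hf₂0, hf₃0, Matrix.one_apply]
end
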